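/- arXiv:1002.2094 — 3 statements merged into one kernel-verified Lean document; each statement's English description precedes it below -/
import Mathlib

section
/- For p > 2 and K ∈ ℝ, the function f(z) = ((p-2)/(p-1))^((p-1)/(p-2)) (K-z)₊^((p-1)/(p-2)) satisfies, for all z < K, the traveling-wave ODE with speed c = 1: -f'(z) - (|f'|^(p-2) f')'(z) + |f'(z)|^(p-1) - f(z) = 0. -/
open Real

/-- For `p > 2` and `K ∈ ℝ`, the explicit profile
`f(z) = ((p-2)/(p-1))^((p-1)/(p-2)) (K-z)₊^((p-1)/(p-2))` satisfies, for all `z < K`,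
the traveling-wave ODE with speed `c = 1`:
`-f' - (|f'|^(p-2) f')' + |f'|^(p-1) - f = 0`. -/
theorem stmt2 (p K : ℝ) (hp : 2 < p)
    (f : ℝ → ℝ)
    (hf : ∀ z, f z = ((p - 2) / (p - 1)) ^ ((p - 1) / (p - 2)) *
      (max (K - z) 0) ^ ((p - 1) / (p - 2)))
    (z : ℝ) (hz : z < K) :
    -deriv f z - deriv (fun s => |deriv f s| ^ (p - 2) * deriv f s) z
      + |deriv f z| ^ (p - 1) - f z = 0 := by
  have hp2 : (0:ℝ) < p - 2 := by linarith
  have hp1 : (0:ℝ) < p - 1 := by linarith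
  set r : ℝ := (p - 2) / (p - 1) with hr
  set α : ℝ := (p - 1) / (p - 2) with hα
  have hr0 : 0 < r := div_pos hp2 hp1
  have hα1 : 1 ≤ α := by rw [hα, le_div_iff₀ hp2]; linarith
  have hα0 : 0 < α := by linarith
  set C : ℝ := r ^ α with hC
  have hC0 : 0 < C := rpow_pos_of_pos hr0 α
  have he2 : (α - 1) * (p - 1) = α := by
    rw [hα]; field_simp; ring
  have hCα : (C * α) ^ (p - 1) = C := by
    have hαr : α = r⁻¹ := by rw [hα, hr, inv_div]
    have h : C * α = r ^ (α - 1) := by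
      rw [hC, hαr, rpow_sub hr0, rpow_one, div_eq_mul_inv]
    rw [h, ← rpow_mul hr0.le, he2]
  -- generic derivative of s ↦ D * (K - s)^α at w < K
  have key : ∀ (D w : ℝ), w < K →
      HasDerivAt (fun s : ℝ => D * (K - s) ^ α) (-(D * α * (K - w) ^ (α - 1))) w := by
    intro D w hw
    have hKw : 0 < K - w := by linarith
    have h1 : HasDerivAt (fun s : ℝ => K - s) (-1) w := (hasDerivAt_id w).const_sub K
    have h2 := (Real.hasDerivAt_rpow_const (x := K - w) (p := α) (Or.inr hα1)).comp w h1
    have h3 : HasDerivAt (fun s : ℝ => D * (K - s) ^ α) (D * (α * (K - w) ^ (α - 1) * -1)) w :=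
      h2.const_mul D
    convert h3 using 1
    ring
  -- derivative of f at any w < K
  have hderivf : ∀ w, w < K → HasDerivAt f (-(C * α * (K - w) ^ (α - 1))) w := by
    intro w hw
    have hev : f =ᶠ[nhds w] (fun s : ℝ => C * (K - s) ^ α) := by
      filter_upwards [Iio_mem_nhds hw] with s hs
      have hs' : s < K := hs
      rw [hf s, max_eq_left (by linarith : (0:ℝ) ≤ K - s)]
    exact (key C w hw).congr_of_eventuallyEq hev
  have hdf : ∀ w, w < K → deriv f w = -(C * α * (K - w) ^ (α - 1)) :=
    fun w hw => (hderivf w hw).deriv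
  have hKz : 0 < K - z := by linarith
  -- eventual formula for the flux term
  have hgev : (fun s => |deriv f s| ^ (p - 2) * deriv f s)
      =ᶠ[nhds z] (fun s : ℝ => (-((C * α) ^ (p - 1))) * (K - s) ^ α) := by
    filter_upwards [Iio_mem_nhds hz] with s hs
    have hs' : s < K := hs
    have hKs : 0 < K - s := by linarith
    have hX : 0 < (K - s) ^ (α - 1) := rpow_pos_of_pos hKs _
    have hpos : 0 < C * α * (K - s) ^ (α - 1) := by positivity
    rw [hdf s hs', abs_neg, abs_of_pos hpos]
    have h4 : (C * α * (K - s) ^ (α - 1)) ^ (p - 2) * (C * α * (K - s) ^ (α - 1))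
        = (C * α) ^ (p - 1) * (K - s) ^ α := by
      rw [show (C * α * (K - s) ^ (α - 1)) ^ (p - 2) * (C * α * (K - s) ^ (α - 1))
            = (C * α * (K - s) ^ (α - 1)) ^ (p - 2) * (C * α * (K - s) ^ (α - 1)) ^ (1:ℝ) by
          rw [rpow_one],
        ← rpow_add hpos, show p - 2 + 1 = p - 1 by ring,
        mul_rpow (by positivity) hX.le, ← rpow_mul hKs.le, he2]
    rw [show (C * α * (K - s) ^ (α - 1)) ^ (p - 2) * -(C * α * (K - s) ^ (α - 1))
        = -((C * α * (K - s) ^ (α - 1)) ^ (p - 2) * (C * α * (K - s) ^ (α - 1))) by ring,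
      h4]
    ring
  have hderivg : deriv (fun s => |deriv f s| ^ (p - 2) * deriv f s) z
      = C * α * (K - z) ^ (α - 1) := by
    have h5 := (key (-((C * α) ^ (p - 1))) z hz).congr_of_eventuallyEq hgev
    rw [h5.deriv, hCα]; ring
  -- values at z
  have hfz : f z = C * (K - z) ^ α := by
    rw [hf z, max_eq_left (by linarith : (0:ℝ) ≤ K - z)]
  have hX : 0 < (K - z) ^ (α - 1) := rpow_pos_of_pos hKz _
  have hpos : 0 < C * α * (K - z) ^ (α - 1) := by positivity
  have habs : |deriv f z| ^ (p - 1) = C * (K - z) ^ α := by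
    rw [hdf z hz, abs_neg, abs_of_pos hpos,
      mul_rpow (by positivity) hX.le, ← rpow_mul hKz.le, he2, hCα]
  rw [hderivg, habs, hfz, hdf z hz]
  ring
end

section
/- For p > 2, R > 0, and the function F_R(τ,y) = ((p-2)/(p-1))^((p-1)/(p-2)) ((τ+R)/(τ+1) - |y|)₊^((p-1)/(p-2)) on (0,∞)×ℝ (so N = 1): at every point (τ,y) with y ≠ 0 and 0 < (τ+R)/(τ+1) - |y|, F_R satisfies ∂_τ F_R - (1/(1+τ))(Δ_p F_R + y ∂_y F_R - ((p-1)/(p-2)) F_R) + |∂_y F_R|^(p-1) - F_R = 0, where Δ_p F = ∂_y(|∂_y F|^(p-2) ∂_y F). -/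
open Real
open Filter
set_option maxHeartbeats 1000000

/-- For `p > 2`, `R > 0`, and `F_R(τ,y) = ((p-2)/(p-1))^((p-1)/(p-2)) ((τ+R)/(τ+1) - |y|)₊^((p-1)/(p-2))`
in dimension `N = 1`: at every point `(τ,y)` with `τ > 0`, `y ≠ 0` and
`(τ+R)/(τ+1) - |y| > 0`, `F_R` satisfies
`∂_τ F - (1/(1+τ))(Δ_p F + y ∂_y F - ((p-1)/(p-2)) F) + |∂_y F|^(p-1) - F = 0`,
where `Δ_p F = ∂_y(|∂_y F|^(p-2) ∂_y F)`. -/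
theorem stmt8 (p R : ℝ) (hp : 2 < p) (hR : 0 < R)
    (F : ℝ → ℝ → ℝ)
    (hF : ∀ τ y, F τ y = ((p - 2) / (p - 1)) ^ ((p - 1) / (p - 2)) *
      (max ((τ + R) / (τ + 1) - |y|) 0) ^ ((p - 1) / (p - 2)))
    (τ y : ℝ) (hτ : 0 < τ) (hy : y ≠ 0) (hpos : 0 < (τ + R) / (τ + 1) - |y|) :
    deriv (fun t => F t y) τ
      - (1 / (1 + τ)) * (deriv (fun s => |deriv (F τ) s| ^ (p - 2) * deriv (F τ) s) y
          + y * deriv (F τ) y - ((p - 1) / (p - 2)) * F τ y)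
      + |deriv (F τ) y| ^ (p - 1) - F τ y = 0 := by
  have hp2 : (0:ℝ) < p - 2 := by linarith
  have hp1 : (0:ℝ) < p - 1 := by linarith
  set α : ℝ := (p - 1) / (p - 2) with hα
  set b : ℝ := (p - 2) / (p - 1) with hb
  set c : ℝ := b ^ α with hc
  set A : ℝ := (τ + R) / (τ + 1) with hA
  set g0 : ℝ := A - |y| with hg0def
  have hbpos : 0 < b := div_pos hp2 hp1
  have hαpos : 0 < α := div_pos hp1 hp2
  have hcpos : 0 < c := rpow_pos_of_pos hbpos α
  have hg0 : 0 < g0 := hpos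
  set K : ℝ := c * α with hK
  have hKpos : 0 < K := mul_pos hcpos hαpos
  have hτ1 : (τ:ℝ) + 1 ≠ 0 := by positivity
  -- K = b ^ (α - 1)
  have hαb : α = b⁻¹ := by
    rw [hα, hb]; rw [inv_div]
  have hKeq : K = b ^ (α - 1) := by
    rw [hK, hc, hαb, Real.rpow_sub hbpos, Real.rpow_one, div_eq_mul_inv]
  have hexp1 : (α - 1) * (p - 1) = α := by
    rw [hα]; field_simp; ring
  have hKp1 : K ^ (p - 1) = c := by
    rw [hKeq, ← Real.rpow_mul hbpos.le, hexp1, hc]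
  have hexp2 : (α - 1) * (p - 2) = 1 := by
    rw [hα]; field_simp; norm_num
  have hKp2 : K ^ (p - 2) * K = c := by
    rw [← hKp1, show p - 1 = (p - 2) + 1 by ring, Real.rpow_add_one hKpos.ne' (p - 2)]
  -- sign
  set sg : ℝ := if 0 < y then 1 else -1 with hsg
  have hsy : sg * y = |y| := by
    rcases lt_or_gt_of_ne hy with h | h
    · rw [hsg, if_neg (not_lt.mpr h.le), abs_of_neg h]; ring
    · rw [hsg, if_pos h, abs_of_pos h]; ring
  have hs1 : sg * sg = 1 := by
    rcases lt_or_gt_of_ne hy with h | h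
    · rw [hsg, if_neg (not_lt.mpr h.le)]; ring
    · rw [hsg, if_pos h]; ring
  have hsabs : |sg| = 1 := by
    rcases lt_or_gt_of_ne hy with h | h
    · rw [hsg, if_neg (not_lt.mpr h.le)]; norm_num
    · rw [hsg, if_pos h]; norm_num
  have hy0 : 0 < A - sg * y := by rw [hsy]; exact hg0
  have hys : ∀ᶠ z in nhds y, |z| = sg * z := by
    rcases lt_or_gt_of_ne hy with h | h
    · filter_upwards [eventually_lt_nhds h] with z hz
      rw [hsg, if_neg (not_lt.mpr h.le), abs_of_neg hz]; ring
    · filter_upwards [eventually_gt_nhds h] with z hz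
      rw [hsg, if_pos h, abs_of_pos hz]; ring
  have hposz : ∀ᶠ z in nhds y, 0 < A - sg * z := by
    have hcontz : Continuous fun z : ℝ => A - sg * z :=
      continuous_const.sub (continuous_const.mul continuous_id)
    exact hcontz.continuousAt.eventually (eventually_gt_nhds hy0)
  -- eventual equality in y
  have hFeq : (F τ) =ᶠ[nhds y] fun z => c * (A - sg * z) ^ α := by
    filter_upwards [hys, hposz] with z h1 h2
    rw [hF τ z, ← hA, h1, max_eq_left h2.le]
  -- derivative of the model function
  have hPhi : ∀ z : ℝ, 0 < A - sg * z →
      HasDerivAt (fun w => c * (A - sg * w) ^ α) (-sg * (K * (A - sg * z) ^ (α - 1))) z := by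
    intro z hz
    have h1 : HasDerivAt (fun w : ℝ => A - sg * w) (-sg) z := by
      simpa using ((hasDerivAt_id z).const_mul sg).const_sub A
    have h2 : HasDerivAt (fun x : ℝ => x ^ α) (α * (A - sg * z) ^ (α - 1)) (A - sg * z) :=
      Real.hasDerivAt_rpow_const (Or.inl hz.ne')
    have h3 := (h2.comp z h1).const_mul c
    have he : -sg * (K * (A - sg * z) ^ (α - 1)) = c * (α * (A - sg * z) ^ (α - 1) * -sg) := by
      rw [hK]; ring
    rw [he]
    exact h3
  have hd1 : deriv (F τ) y = -sg * (K * g0 ^ (α - 1)) := by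
    rw [hFeq.deriv_eq, (hPhi y hy0).deriv, hsy, ← hg0def]
  -- eventual derivative formula
  have hd_ev : ∀ᶠ z in nhds y, deriv (F τ) z = -sg * (K * (A - sg * z) ^ (α - 1)) := by
    filter_upwards [hFeq.eventuallyEq_nhds, hposz] with z h1 h2
    rw [h1.deriv_eq, (hPhi z h2).deriv]
  -- eventual formula for the p-Laplacian integrand
  have hHeq : (fun z => |deriv (F τ) z| ^ (p - 2) * deriv (F τ) z) =ᶠ[nhds y]
      fun z => -sg * (c * (A - sg * z) ^ α) := by
    filter_upwards [hd_ev, hposz] with z h1 h2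
    rw [h1]
    have habs : |(-sg * (K * (A - sg * z) ^ (α - 1)))| = K * (A - sg * z) ^ (α - 1) := by
      rw [abs_mul, abs_neg, hsabs, one_mul,
        abs_of_nonneg (by positivity : (0:ℝ) ≤ K * (A - sg * z) ^ (α - 1))]
    rw [habs, Real.mul_rpow hKpos.le (by positivity), ← Real.rpow_mul h2.le, hexp2,
      Real.rpow_one]
    have e2 : (A - sg * z) * (A - sg * z) ^ (α - 1) = (A - sg * z) ^ α := by
      nth_rewrite 1 [← Real.rpow_one (A - sg * z)]
      rw [← Real.rpow_add h2]
      norm_num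
    calc K ^ (p - 2) * (A - sg * z) * (-sg * (K * (A - sg * z) ^ (α - 1)))
        = -sg * ((K ^ (p - 2) * K) * ((A - sg * z) * (A - sg * z) ^ (α - 1))) := by ring
      _ = -sg * (c * (A - sg * z) ^ α) := by rw [hKp2, e2]
  -- derivative of the p-Laplacian integrand
  have hHder : deriv (fun z => |deriv (F τ) z| ^ (p - 2) * deriv (F τ) z) y
      = K * g0 ^ (α - 1) := by
    rw [hHeq.deriv_eq, ((hPhi y hy0).const_mul (-sg)).deriv, hsy, ← hg0def]
    calc -sg * (-sg * (K * g0 ^ (α - 1))) = (sg * sg) * (K * g0 ^ (α - 1)) := by ring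
      _ = K * g0 ^ (α - 1) := by rw [hs1]; ring
  -- time derivative
  have hposA : 0 < (τ + R) / (τ + 1) - |y| := by rw [← hA, ← hg0def]; exact hpos
  have htaud : deriv (fun t => F t y) τ
      = K * g0 ^ (α - 1) * ((1 - R) / (τ + 1) / (τ + 1)) := by
    have hcont : ContinuousAt (fun t : ℝ => (t + R) / (t + 1) - |y|) τ := by
      apply ContinuousAt.sub _ continuousAt_const
      exact (continuousAt_id.add continuousAt_const).div
        (continuousAt_id.add continuousAt_const) hτ1
    have hpos' : ∀ᶠ t in nhds τ, 0 < (t + R) / (t + 1) - |y| :=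
      hcont.eventually (eventually_gt_nhds hposA)
    have hFeqt : (fun t => F t y) =ᶠ[nhds τ] fun t => c * ((t + R) / (t + 1) - |y|) ^ α := by
      filter_upwards [hpos'] with t ht
      rw [hF t y, max_eq_left ht.le]
    rw [hFeqt.deriv_eq]
    have h1 : HasDerivAt (fun t : ℝ => (t + R) / (t + 1))
        ((1 * (τ + 1) - (τ + R) * 1) / (τ + 1) ^ 2) τ :=
      ((hasDerivAt_id τ).add_const R).div ((hasDerivAt_id τ).add_const 1) hτ1
    have h2 := h1.sub_const |y|
    have h3 : HasDerivAt (fun x : ℝ => x ^ α)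
        (α * ((τ + R) / (τ + 1) - |y|) ^ (α - 1)) ((τ + R) / (τ + 1) - |y|) :=
      Real.hasDerivAt_rpow_const (Or.inl hposA.ne')
    have h4' : HasDerivAt (fun t : ℝ => c * ((t + R) / (t + 1) - |y|) ^ α)
        (c * (α * ((τ + R) / (τ + 1) - |y|) ^ (α - 1) *
          ((1 * (τ + 1) - (τ + R) * 1) / (τ + 1) ^ 2))) τ := by
      have h4 := (h3.comp τ h2).const_mul c
      exact h4
    have hD : (1 * (τ + 1) - (τ + R) * 1) / (τ + 1) ^ 2 = (1 - R) / (τ + 1) / (τ + 1) := by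
      rw [div_div, ← sq]
      congr 1
      ring
    rw [h4'.deriv, ← hA, ← hg0def, hD, hK]
    ring
  -- |∂_y F|^(p-1)
  have habs1 : |deriv (F τ) y| ^ (p - 1) = c * g0 ^ α := by
    rw [hd1, abs_mul, abs_neg, hsabs, one_mul,
      abs_of_nonneg (by positivity : (0:ℝ) ≤ K * g0 ^ (α - 1)),
      Real.mul_rpow hKpos.le (by positivity), hKp1, ← Real.rpow_mul hg0.le, hexp1]
  have hFval : F τ y = c * g0 ^ α := by
    rw [hF τ y, ← hA, ← hg0def, max_eq_left hg0.le]
  -- assemble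
  rw [htaud, hHder, habs1, hFval, hd1]
  have hsplit : g0 ^ α = g0 ^ (α - 1) * g0 := by
    nth_rewrite 1 [show α = (α - 1) + 1 by ring]
    exact Real.rpow_add_one hg0.ne' (α - 1)
  rw [hsplit, hK]
  have h1 : 1 - |y| - g0 = (1 - R) / (τ + 1) := by
    rw [hg0def, hA]; field_simp; ring
  have h1τ : (1:ℝ) + τ ≠ 0 := by positivity
  generalize g0 ^ (α - 1) = X
  linear_combination (-(c * α * X / (1 + τ))) * h1 + (c * α * X / (1 + τ)) * hsy
end

section
/- Let p > 2, R ∈ (0,1), ϑ ∈ (0,1), β ∈ (1/2,1], and in dimension N = 1 define F_{R,ϑ,β}(τ,y) = ϑ((p-2)/(p-1))^((p-1)/(p-2)) (β(τ+R)/(τ+1) - |y|)₊^((p-1)/(p-2)). Then at any point (τ,y) with y ≠ 0 and 0 < β(τ+R)/(τ+1) - |y|, the quantity L := ∂_τ F - (1/(1+τ))(Δ_p F + y∂_y F - ((p-1)/(p-2))F) + |∂_y F|^(p-1) - F (with F = F_{R,ϑ,β}) equals ϑ[(β-ϑ^(p-2))/(1+τ) - (1-ϑ^(p-2)) F_{R,1,β}^((p-2)/(p-1))]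 · F_{R,1,β}^(1/(p-1)). -/
set_option maxHeartbeats 1000000


open Real Set Filter Topology

/-- For `p > 2`, `R ∈ (0,1)`, `ϑ ∈ (0,1)`, `β ∈ (1/2,1]` and
`F_{R,ϑ,β}(τ,y) = ϑ((p-2)/(p-1))^((p-1)/(p-2)) (β(τ+R)/(τ+1) - |y|)₊^((p-1)/(p-2))`
in dimension `N = 1`: at any point `(τ,y)` with `τ > 0`, `y ≠ 0` and
`β(τ+R)/(τ+1) - |y| > 0`, the quantity
`L = ∂_τ F - (1/(1+τ))(Δ_p F + y ∂_y F - ((p-1)/(p-2))F) + |∂_y F|^(p-1) - F`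
(with `F = F_{R,ϑ,β}`) equals
`ϑ[(β-ϑ^(p-2))/(1+τ) - (1-ϑ^(p-2)) F_{R,1,β}^((p-2)/(p-1))] F_{R,1,β}^(1/(p-1))`. -/
theorem stmt9 (p R ϑ β : ℝ) (hp : 2 < p) (hR : R ∈ Ioo (0 : ℝ) 1)
    (hϑ : ϑ ∈ Ioo (0 : ℝ) 1) (hβ : β ∈ Ioc (1 / 2 : ℝ) 1)
    (F F1 : ℝ → ℝ → ℝ)
    (hF : ∀ τ y, F τ y = ϑ * ((p - 2) / (p - 1)) ^ ((p - 1) / (p - 2)) *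
      (max (β * (τ + R) / (τ + 1) - |y|) 0) ^ ((p - 1) / (p - 2)))
    (hF1 : ∀ τ y, F1 τ y = ((p - 2) / (p - 1)) ^ ((p - 1) / (p - 2)) *
      (max (β * (τ + R) / (τ + 1) - |y|) 0) ^ ((p - 1) / (p - 2)))
    (τ y : ℝ) (hτ : 0 < τ) (hy : y ≠ 0)
    (hpos : 0 < β * (τ + R) / (τ + 1) - |y|) :
    deriv (fun t => F t y) τ
      - (1 / (1 + τ)) * (deriv (fun s => |deriv (F τ) s| ^ (p - 2) * deriv (F τ) s) y
          + y * deriv (F τ) y - ((p - 1) / (p - 2)) * F τ y)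
      + |deriv (F τ) y| ^ (p - 1) - F τ y
    = ϑ * ((β - ϑ ^ (p - 2)) / (1 + τ)
        - (1 - ϑ ^ (p - 2)) * (F1 τ y) ^ ((p - 2) / (p - 1))) * (F1 τ y) ^ (1 / (p - 1)) := by
  obtain ⟨hR0, hR1⟩ := hR
  obtain ⟨hϑ0, hϑ1⟩ := hϑ
  have hp2 : (0:ℝ) < p - 2 := by linarith
  have hp1 : (0:ℝ) < p - 1 := by linarith
  have hτ1 : (0:ℝ) < τ + 1 := by linarith
  have h1τ : (0:ℝ) < 1 + τ := by linarith
  set q : ℝ := (p - 1) / (p - 2) with hqdef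
  set b : ℝ := (p - 2) / (p - 1) with hbdef
  have hb0 : 0 < b := div_pos hp2 hp1
  have hq1 : 1 < q := by rw [hqdef, lt_div_iff₀ hp2]; linarith
  have hq0 : 0 < q := by linarith
  have hbq : b * q = 1 := by rw [hbdef, hqdef]; field_simp
  have hqq : (q - 1) * (p - 1) = q := by rw [hqdef]; field_simp; ring
  set c : ℝ := b ^ q with hcdef
  have hc0 : 0 < c := rpow_pos_of_pos hb0 q
  set g0 : ℝ := β * (τ + R) / (τ + 1) with hg0def
  set g : ℝ := g0 - |y| with hgdef
  have hgpos : 0 < g := hpos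
  -- τ-derivative of the inner function
  have hu : HasDerivAt (fun t => β * (t + R) / (t + 1) - |y|)
      (β * (1 - R) / (τ + 1) ^ 2) τ := by
    have h1 : HasDerivAt (fun t : ℝ => β * (t + R)) β τ := by
      simpa using ((hasDerivAt_id τ).add_const R).const_mul β
    have h2 : HasDerivAt (fun t : ℝ => t + 1) 1 τ := (hasDerivAt_id τ).add_const 1
    have h3 := (h1.div h2 (by simpa using hτ1.ne')).sub_const |y|
    refine h3.congr_deriv ?_
    ring
  -- Step 1 : deriv in τ
  have hev1 : (fun t => F t y) =ᶠ[𝓝 τ]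
      fun t => ϑ * c * (β * (t + R) / (t + 1) - |y|) ^ q := by
    have hposev : ∀ᶠ t in 𝓝 τ, 0 < β * (t + R) / (t + 1) - |y| := by
      have := hu.continuousAt.eventually_mem (isOpen_Ioi.mem_nhds (show
        β * (τ + R) / (τ + 1) - |y| ∈ Ioi (0:ℝ) from hpos))
      filter_upwards [this] with t ht using ht
    filter_upwards [hposev] with t ht
    rw [hF, max_eq_left ht.le, hcdef]
  have hd1 : deriv (fun t => F t y) τ
      = ϑ * c * (β * (1 - R) / (τ + 1) ^ 2 * q * g ^ (q - 1)) := by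
    rw [hev1.deriv_eq]
    have H := (hu.rpow_const (p := q) (Or.inl hpos.ne')).const_mul (ϑ * c)
    simp only [H.deriv]
    rfl
  -- sign of y
  set sgn : ℝ := if 0 < y then 1 else -1 with hsgndef
  have hs2 : sgn * sgn = 1 := by rw [hsgndef]; split_ifs <;> norm_num
  have hsabs : |sgn| = 1 := by rw [hsgndef]; split_ifs <;> norm_num
  have hsy : 0 < sgn * y := by
    rw [hsgndef]; split_ifs with h
    · simpa using h
    · have : y < 0 := lt_of_le_of_ne (not_lt.mp h) hy
      nlinarith
  have habs : ∀ s : ℝ, 0 < sgn * s → |s| = sgn * s := by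
    intro s hs
    calc |s| = |sgn| * |s| := by rw [hsabs, one_mul]
      _ = |sgn * s| := (abs_mul sgn s).symm
      _ = sgn * s := abs_of_pos hs
  have hyg : sgn * y = g0 - g := by
    have := habs y hsy
    rw [hgdef]; linarith
  have hgy : g0 - sgn * y = g := by linarith [hyg]
  -- neighborhood conditions in y
  have hU : ∀ᶠ s in 𝓝 y, 0 < sgn * s ∧ 0 < g0 - sgn * s := by
    have c1 : ContinuousAt (fun s : ℝ => sgn * s) y := by fun_prop
    have c2 : ContinuousAt (fun s : ℝ => g0 - sgn * s) y := by fun_prop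
    have e1 := c1.eventually_mem (isOpen_Ioi.mem_nhds (show sgn * y ∈ Ioi (0:ℝ) from hsy))
    have e2 := c2.eventually_mem (isOpen_Ioi.mem_nhds (show g0 - sgn * y ∈ Ioi (0:ℝ) by
      rw [hgy]; exact hgpos))
    filter_upwards [e1, e2] with s h1 h2 using ⟨h1, h2⟩
  set K : ℝ := ϑ * c * q with hKdef
  have hK0 : 0 < K := by positivity
  -- derivative of F τ on a neighborhood of y
  have hderivF : ∀ᶠ s in 𝓝 y,
      deriv (F τ) s = -sgn * K * (g0 - sgn * s) ^ (q - 1) := by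
    filter_upwards [eventually_eventually_nhds.2 hU] with s hs
    have hss : 0 < sgn * s ∧ 0 < g0 - sgn * s := hs.self_of_nhds
    have heq : F τ =ᶠ[𝓝 s] fun s' => ϑ * c * (g0 - sgn * s') ^ q := by
      filter_upwards [hs] with s' hs'
      rw [hF, ← hg0def, habs s' hs'.1, max_eq_left hs'.2.le, hcdef]
    rw [heq.deriv_eq]
    have hds : HasDerivAt (fun s' : ℝ => g0 - sgn * s') (-sgn) s := by
      simpa using ((hasDerivAt_id s).const_mul sgn).const_sub g0
    have H := (hds.rpow_const (p := q) (Or.inl hss.2.ne')).const_mul (ϑ * c)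
    rw [H.deriv, hKdef]; ring
  -- the p-Laplacian integrand on a neighborhood of y
  have hPL : (fun s => |deriv (F τ) s| ^ (p - 2) * deriv (F τ) s)
      =ᶠ[𝓝 y] fun s => -sgn * K ^ (p - 1) * (g0 - sgn * s) ^ q := by
    filter_upwards [hderivF, hU] with s hd hs
    rw [hd]
    have hh : 0 < g0 - sgn * s := hs.2
    have hhe : 0 < (g0 - sgn * s) ^ (q - 1) := rpow_pos_of_pos hh _
    have habs1 : |-sgn * K * (g0 - sgn * s) ^ (q - 1)| = K * (g0 - sgn * s) ^ (q - 1) := by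
      rw [abs_mul, abs_mul, abs_neg, hsabs, abs_of_pos hK0, abs_of_pos hhe, one_mul]
    rw [habs1, mul_rpow hK0.le hhe.le, ← Real.rpow_mul hh.le]
    have e1 : K ^ (p - 2) * K = K ^ (p - 1) := by
      rw [show p - 1 = p - 2 + 1 by ring, Real.rpow_add_one hK0.ne']
    have e2 : (g0 - sgn * s) ^ ((q - 1) * (p - 2)) * (g0 - sgn * s) ^ (q - 1)
        = (g0 - sgn * s) ^ q := by
      rw [← Real.rpow_add hh]
      congr 1
      linear_combination hqq
    calc K ^ (p - 2) * (g0 - sgn * s) ^ ((q - 1) * (p - 2))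
          * (-sgn * K * (g0 - sgn * s) ^ (q - 1))
        = -sgn * (K ^ (p - 2) * K)
          * ((g0 - sgn * s) ^ ((q - 1) * (p - 2)) * (g0 - sgn * s) ^ (q - 1)) := by ring
      _ = _ := by rw [e1, e2]
  -- derivative of the p-Laplacian integrand at y
  have hd2 : deriv (fun s => |deriv (F τ) s| ^ (p - 2) * deriv (F τ) s) y
      = K ^ (p - 1) * q * g ^ (q - 1) := by
    rw [hPL.deriv_eq]
    have hds : HasDerivAt (fun s' : ℝ => g0 - sgn * s') (-sgn) y := by
      simpa using ((hasDerivAt_id y).const_mul sgn).const_sub g0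
    have hne : g0 - sgn * y ≠ 0 := by rw [hgy]; exact hgpos.ne'
    have H := (hds.rpow_const (p := q) (Or.inl hne)).const_mul (-sgn * K ^ (p - 1))
    rw [H.deriv, hgy]
    linear_combination K ^ (p - 1) * q * g ^ (q - 1) * hs2
  -- value of deriv (F τ) at y and its powers
  have hvy : deriv (F τ) y = -sgn * K * g ^ (q - 1) := by
    rw [hderivF.self_of_nhds, hgy]
  have hKp : K ^ (p - 1) = ϑ ^ (p - 1) * c := by
    have hcq : c * q = b ^ (q - 1) := by
      rw [Real.rpow_sub hb0, Real.rpow_one, ← hcdef, eq_div_iff hb0.ne']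
      linear_combination c * hbq
    calc K ^ (p - 1) = (ϑ * (c * q)) ^ (p - 1) := by rw [hKdef, mul_assoc]
      _ = ϑ ^ (p - 1) * (b ^ (q - 1)) ^ (p - 1) := by
          rw [mul_rpow hϑ0.le (by positivity), hcq]
      _ = ϑ ^ (p - 1) * c := by
          rw [← Real.rpow_mul hb0.le, hqq, ← hcdef]
  have habsy : |deriv (F τ) y| ^ (p - 1) = K ^ (p - 1) * g ^ q := by
    have hge : 0 < g ^ (q - 1) := rpow_pos_of_pos hgpos _
    have h1 : |deriv (F τ) y| = K * g ^ (q - 1) := by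
      rw [hvy, abs_mul, abs_mul, abs_neg, hsabs, abs_of_pos hK0, abs_of_pos hge, one_mul]
    rw [h1, mul_rpow hK0.le hge.le, ← Real.rpow_mul hgpos.le, hqq]
  -- values of F and F1
  have hFy : F τ y = ϑ * c * g ^ q := by
    rw [hF, ← hg0def, ← hgdef, max_eq_left hgpos.le, hcdef]
  have hF1y : F1 τ y = c * g ^ q := by
    rw [hF1, ← hg0def, ← hgdef, max_eq_left hgpos.le, hcdef]
  -- powers of F1
  have hP1 : (c * g ^ q) ^ b = b * g := by
    rw [hcdef, mul_rpow (by positivity) (by positivity), ← Real.rpow_mul hb0.le,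
      ← Real.rpow_mul hgpos.le, mul_comm q b, hbq, Real.rpow_one, Real.rpow_one]
  have hq2 : q * (1 / (p - 1)) = q - 1 := by rw [hqdef]; field_simp; ring
  have hP2 : (c * g ^ q) ^ (1 / (p - 1)) = c * q * g ^ (q - 1) := by
    have hcq : c * q = b ^ (q - 1) := by
      rw [Real.rpow_sub hb0, Real.rpow_one, ← hcdef, eq_div_iff hb0.ne']
      linear_combination c * hbq
    rw [hcdef, mul_rpow (by positivity) (by positivity), ← Real.rpow_mul hb0.le,
      ← Real.rpow_mul hgpos.le, hq2, ← hcq]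
  -- ϑ and g power splits
  have hϑp : ϑ ^ (p - 1) = ϑ ^ (p - 2) * ϑ := by
    rw [show p - 1 = p - 2 + 1 by ring, Real.rpow_add_one hϑ0.ne']
  have hgq : g ^ q = g ^ (q - 1) * g := by
    nth_rewrite 1 [show q = q - 1 + 1 by ring]
    rw [Real.rpow_add_one hgpos.ne']
  -- assemble
  rw [hd1, hd2, habsy, hvy, hFy, hF1y, hP1, hP2, hKp, hϑp, hgq]
  -- replace y * (-sgn * K * g ^ (q-1)) using sgn * y = g0 - g
  have hyK : y * (-sgn * K * g ^ (q - 1)) = -(g0 - g) * K * g ^ (q - 1) := by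
    rw [← hyg]; ring
  rw [hyK, hKdef, hg0def, hqdef, hbdef]
  field_simp
  ring
end
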